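/- Let $G$ be a Cameron--Walker graph with standard labeling (bipartite part $\{v_1,\ldots,v_m\}\cup\{w_1,\ldots,w_n\}$, $s_i \geq 1$ leaves at each $v_i$, $t_j \geq 0$ pendant triangles at each $w_j$), and let $i(G)$ be the minimum cardinality of an independent set $A \subseteq V(G)$ with $A \cup N_G(A) = V(G)$. Then $m + |\{j : t_j > 0\}| \leq i(G) \leq \min\{\sum_{i=1}^m s_i + n, \; \sum_{j=1}^n t_j + m\}$. -/

import Mathlib

/-- Vertices of a Cameron–Walker graph with standard labeling: the `vᵢ`, the `wⱼ`,
the leaves `x^(i)_k` (`1 ≤ k ≤ sᵢ`), and the pendant-triangle vertices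
`y^(j)_{ℓ,1}, y^(j)_{ℓ,2}` (`1 ≤ ℓ ≤ tⱼ`). -/
abbrev CWVert (m n : ℕ) (s : Fin m → ℕ) (t : Fin n → ℕ) : Type :=
  Fin m ⊕ Fin n ⊕ (Σ i : Fin m, Fin (s i)) ⊕ (Σ j : Fin n, Fin (t j) × Fin 2)

def cwRel (m n : ℕ) (s : Fin m → ℕ) (t : Fin n → ℕ) (B : Fin m → Fin n → Prop) :
    CWVert m n s t → CWVert m n s t → Prop
  | Sum.inl i, Sum.inr (Sum.inl j) => B i j
  | Sum.inl i, Sum.inr (Sum.inr (Sum.inl ⟨i', _⟩)) => i = i'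
  | Sum.inr (Sum.inl j), Sum.inr (Sum.inr (Sum.inr ⟨j', _, _⟩)) => j = j'
  | Sum.inr (Sum.inr (Sum.inr ⟨j, ℓ, _⟩)), Sum.inr (Sum.inr (Sum.inr ⟨j', ℓ', _⟩)) =>
      j = j' ∧ (ℓ : ℕ) = (ℓ' : ℕ)
  | _, _ => False

/-- The Cameron–Walker graph determined by the data `m, n, s, t, B`: a bipartite part
on `{v₁,…,v_m} ∪ {w₁,…,w_n}` with edges given by `B`, `s i` leaf edges attached to `vᵢ`,
and `t j` pendant triangles attached to `wⱼ`. -/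
def cwGraph (m n : ℕ) (s : Fin m → ℕ) (t : Fin n → ℕ) (B : Fin m → Fin n → Prop) :
    SimpleGraph (CWVert m n s t) :=
  SimpleGraph.fromRel (cwRel m n s t B)

/-- The bipartite part of the Cameron–Walker graph. -/
def bipGraph (m n : ℕ) (B : Fin m → Fin n → Prop) : SimpleGraph (Fin m ⊕ Fin n) :=
  SimpleGraph.fromRel fun a b =>
    match a, b with
    | Sum.inl i, Sum.inr j => B i j
    | _, _ => False

/-- An independent dominating set: an independent set `A` with `A ∪ N_G(A) = V(G)`. -/
def IsIndepDomSet {V : Type} (G : SimpleGraph V) (A : Finset V) : Prop :=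
  (∀ a ∈ A, ∀ b ∈ A, ¬ G.Adj a b) ∧ (∀ v, v ∈ A ∨ ∃ a ∈ A, G.Adj a v)

/-- `i(G)`: the minimum cardinality of an independent dominating set of `G`. -/
noncomputable def indepDomNumber {V : Type} (G : SimpleGraph V) : ℕ :=
  sInf {k | ∃ A : Finset V, IsIndepDomSet G A ∧ A.card = k}

/-- The independence number: the maximum cardinality of an independent set of `G`. -/
noncomputable def indepNumber {V : Type} [Fintype V] (G : SimpleGraph V) : ℕ :=
  sSup {k | ∃ A : Finset V, (∀ a ∈ A, ∀ b ∈ A, ¬ G.Adj a b) ∧ A.card = k}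

/-- The matching number: the maximum cardinality of a matching of `G`. -/
noncomputable def matchingNumber {V : Type} [Fintype V] (G : SimpleGraph V) : ℕ :=
  sSup {k | ∃ M : Finset (Sym2 V), (∀ e ∈ M, e ∈ G.edgeSet) ∧
    (∀ e ∈ M, ∀ e' ∈ M, e ≠ e' → ∀ v, v ∈ e → v ∉ e') ∧ M.card = k}
/-! ### Auxiliary material -/

section CWAux

variable {m n : ℕ} {s : Fin m → ℕ} {t : Fin n → ℕ} {B : Fin m → Fin n → Prop}

/-- The zone of a vertex: leaves are merged with their `vᵢ`, triangle
vertices with their `wⱼ`. -/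
def cwZone : CWVert m n s t → Fin m ⊕ Fin n
  | Sum.inl i => Sum.inl i
  | Sum.inr (Sum.inl j) => Sum.inr j
  | Sum.inr (Sum.inr (Sum.inl x)) => Sum.inl x.1
  | Sum.inr (Sum.inr (Sum.inr y)) => Sum.inr y.1

lemma cw_adj_iff (a b : CWVert m n s t) :
    (cwGraph m n s t B).Adj a b ↔ a ≠ b ∧ (cwRel m n s t B a b ∨ cwRel m n s t B b a) :=
  SimpleGraph.fromRel_adj _ a b

lemma exists_B (hm : 1 ≤ m) (hconn : (bipGraph m n B).Connected) (j : Fin n) :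
    ∃ i, B i j := by
  have h : (bipGraph m n B).Reachable (Sum.inr j) (Sum.inl ⟨0, hm⟩) :=
    hconn.preconnected _ _
  obtain ⟨w⟩ := h
  cases w with
  | cons hadj p =>
    rename_i b
    rw [bipGraph, SimpleGraph.fromRel_adj] at hadj
    obtain ⟨-, h | h⟩ := hadj
    · cases b with
      | inl i => exact absurd h (by simp)
      | inr j' => exact absurd h (by simp)
    · cases b with
      | inl i => exact ⟨i, h⟩
      | inr j' => exact absurd h (by simp)

/-- First indep dominating set: all leaves plus all `wⱼ`. -/
noncomputable def cwA1 (m n : ℕ) (s : Fin m → ℕ) (t : Fin n → ℕ) :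
    Finset (CWVert m n s t) :=
  ((Finset.univ : Finset (Σ i : Fin m, Fin (s i))).map
      ⟨fun x => Sum.inr (Sum.inr (Sum.inl x)), fun a b h => by simpa using h⟩) ∪
  ((Finset.univ : Finset (Fin n)).map
      ⟨fun j => Sum.inr (Sum.inl j), fun a b h => by simpa using h⟩)

lemma mem_cwA1 (a : CWVert m n s t) :
    a ∈ cwA1 m n s t ↔ (∃ x : Σ i : Fin m, Fin (s i), a = Sum.inr (Sum.inr (Sum.inl x))) ∨
      (∃ j : Fin n, a = Sum.inr (Sum.inl j)) := by
  simp [cwA1, eq_comm]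
  exact Iff.rfl

lemma cwA1_card : (cwA1 m n s t).card = (∑ i, s i) + n := by
  rw [cwA1, Finset.card_union_of_disjoint]
  · simp
  · rw [Finset.disjoint_left]
    rintro a ha hb
    simp only [Finset.mem_map, Finset.mem_univ, Function.Embedding.coeFn_mk, true_and] at ha hb
    obtain ⟨x, rfl⟩ := ha
    obtain ⟨j, h⟩ := hb
    cases h

lemma cwA1_isIndepDom (hs : ∀ i, 1 ≤ s i) :
    IsIndepDomSet (cwGraph m n s t B) (cwA1 m n s t) := by
  constructor
  · intro a ha b hb hadj
    rw [mem_cwA1] at ha hb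
    rw [cw_adj_iff] at hadj
    obtain ⟨hne, h | h⟩ := hadj <;>
    · rcases ha with ⟨⟨i, k⟩, rfl⟩ | ⟨j, rfl⟩ <;> rcases hb with ⟨⟨i', k'⟩, rfl⟩ | ⟨j', rfl⟩ <;>
        simp [cwRel] at h
  · intro v
    rcases v with i | j | x | y
    · right
      refine ⟨Sum.inr (Sum.inr (Sum.inl ⟨i, ⟨0, hs i⟩⟩)), ?_, ?_⟩
      · rw [mem_cwA1]; exact Or.inl ⟨_, rfl⟩
      · rw [cw_adj_iff]
        exact ⟨by simp, Or.inr (by simp [cwRel])⟩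
    · left; rw [mem_cwA1]; exact Or.inr ⟨j, rfl⟩
    · left; rw [mem_cwA1]; exact Or.inl ⟨x, rfl⟩
    · right
      obtain ⟨j, ℓ, c⟩ := y
      refine ⟨Sum.inr (Sum.inl j), ?_, ?_⟩
      · rw [mem_cwA1]; exact Or.inr ⟨j, rfl⟩
      · rw [cw_adj_iff]
        exact ⟨by simp, Or.inl (by simp [cwRel])⟩

/-- Second indep dominating set: all `vᵢ` plus one vertex from each pendant triangle. -/
noncomputable def cwA2 (m n : ℕ) (s : Fin m → ℕ) (t : Fin n → ℕ) :
    Finset (CWVert m n s t) :=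
  ((Finset.univ : Finset (Fin m)).map ⟨Sum.inl, Sum.inl_injective⟩) ∪
  ((Finset.univ : Finset (Σ j : Fin n, Fin (t j))).map
      ⟨fun y => Sum.inr (Sum.inr (Sum.inr ⟨y.1, y.2, 0⟩)), by
        rintro ⟨j, ℓ⟩ ⟨j', ℓ'⟩ h
        simp only [Sum.inr.injEq] at h
        obtain ⟨rfl, h2⟩ := Sigma.mk.inj_iff.mp h
        simp_all⟩)

lemma mem_cwA2 (a : CWVert m n s t) :
    a ∈ cwA2 m n s t ↔ (∃ i : Fin m, a = Sum.inl i) ∨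
      (∃ y : Σ j : Fin n, Fin (t j), a = Sum.inr (Sum.inr (Sum.inr ⟨y.1, y.2, 0⟩))) := by
  simp [cwA2, eq_comm]
  exact Iff.rfl

lemma cwA2_card : (cwA2 m n s t).card = m + ∑ j, t j := by
  rw [cwA2, Finset.card_union_of_disjoint]
  · simp
  · rw [Finset.disjoint_left]
    rintro a ha hb
    simp only [Finset.mem_map, Finset.mem_univ, Function.Embedding.coeFn_mk, true_and] at ha hb
    obtain ⟨x, rfl⟩ := ha
    obtain ⟨j, h⟩ := hb
    simp at h

lemma cwA2_isIndepDom (hm : 1 ≤ m) (hconn : (bipGraph m n B).Connected) :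
    IsIndepDomSet (cwGraph m n s t B) (cwA2 m n s t) := by
  constructor
  · intro a ha b hb hadj
    rw [mem_cwA2] at ha hb
    rw [cw_adj_iff] at hadj
    obtain ⟨hne, h | h⟩ := hadj <;>
    · rcases ha with ⟨i, rfl⟩ | ⟨⟨j, ℓ⟩, rfl⟩ <;> rcases hb with ⟨i', rfl⟩ | ⟨⟨j', ℓ'⟩, rfl⟩ <;>
        simp only [cwRel] at h <;>
      · obtain ⟨rfl, h2⟩ := h
        exact hne (by simp [Fin.ext h2])
  · intro v
    rcases v with i | j | ⟨i, k⟩ | ⟨j, ℓ, c⟩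
    · left; rw [mem_cwA2]; exact Or.inl ⟨i, rfl⟩
    · right
      obtain ⟨i, hB⟩ := exists_B hm hconn j
      refine ⟨Sum.inl i, ?_, ?_⟩
      · rw [mem_cwA2]; exact Or.inl ⟨i, rfl⟩
      · rw [cw_adj_iff]
        exact ⟨by simp, Or.inl (by simp [cwRel, hB])⟩
    · right
      refine ⟨Sum.inl i, ?_, ?_⟩
      · rw [mem_cwA2]; exact Or.inl ⟨i, rfl⟩
      · rw [cw_adj_iff]
        exact ⟨by simp, Or.inl (by simp [cwRel])⟩
    · rcases c with ⟨cv, hc⟩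
      interval_cases cv
      · left; rw [mem_cwA2]; exact Or.inr ⟨⟨j, ℓ⟩, rfl⟩
      · right
        refine ⟨Sum.inr (Sum.inr (Sum.inr ⟨j, ℓ, 0⟩)), ?_, ?_⟩
        · rw [mem_cwA2]; exact Or.inr ⟨⟨j, ℓ⟩, rfl⟩
        · rw [cw_adj_iff]
          refine ⟨by simp, Or.inl (by simp [cwRel])⟩

/-! ### Lower bound -/

lemma zone_hits_m (hs : ∀ i, 1 ≤ s i) {A : Finset (CWVert m n s t)}
    (hA : IsIndepDomSet (cwGraph m n s t B) A) (i : Fin m) :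
    ∃ a ∈ A, cwZone a = Sum.inl i := by
  rcases hA.2 (Sum.inr (Sum.inr (Sum.inl ⟨i, ⟨0, hs i⟩⟩))) with h | ⟨a, ha, hadj⟩
  · exact ⟨_, h, rfl⟩
  · rw [cw_adj_iff] at hadj
    obtain ⟨-, h | h⟩ := hadj
    · rcases a with i' | j' | ⟨i', k'⟩ | ⟨j', ℓ', c'⟩ <;> simp [cwRel] at h
      exact ⟨_, ha, by simp [cwZone, h]⟩
    · rcases a with i' | j' | ⟨i', k'⟩ | ⟨j', ℓ', c'⟩ <;> simp [cwRel] at h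

lemma zone_hits_n {A : Finset (CWVert m n s t)}
    (hA : IsIndepDomSet (cwGraph m n s t B) A) (j : Fin n) (hj : 0 < t j) :
    ∃ a ∈ A, cwZone a = Sum.inr j := by
  rcases hA.2 (Sum.inr (Sum.inr (Sum.inr ⟨j, ⟨0, hj⟩, 0⟩))) with h | ⟨a, ha, hadj⟩
  · exact ⟨_, h, rfl⟩
  · rw [cw_adj_iff] at hadj
    obtain ⟨-, h | h⟩ := hadj
    · rcases a with i' | j' | ⟨i', k'⟩ | ⟨j', ℓ', c'⟩ <;> simp [cwRel] at h
      · exact ⟨_, ha, by simp [cwZone, h]⟩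
      · exact ⟨_, ha, by simp [cwZone, h.1]⟩
    · rcases a with i' | j' | ⟨i', k'⟩ | ⟨j', ℓ', c'⟩ <;> simp [cwRel] at h
      exact ⟨_, ha, by simp [cwZone, h.1]⟩

lemma cw_lower_bound (hs : ∀ i, 1 ≤ s i) {A : Finset (CWVert m n s t)}
    (hA : IsIndepDomSet (cwGraph m n s t B) A) :
    m + (Finset.univ.filter fun j => 0 < t j).card ≤ A.card := by
  classical
  set T : Finset (Fin m ⊕ Fin n) :=
    ((Finset.univ : Finset (Fin m)).map ⟨Sum.inl, Sum.inl_injective⟩) ∪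
    ((Finset.univ.filter fun j => 0 < t j).map ⟨Sum.inr, Sum.inr_injective⟩) with hT
  have hTcard : T.card = m + (Finset.univ.filter fun j => 0 < t j).card := by
    rw [hT, Finset.card_union_of_disjoint]
    · simp
    · rw [Finset.disjoint_left]
      rintro a ha hb
      simp only [Finset.mem_map, Finset.mem_univ, Finset.mem_filter,
        Function.Embedding.coeFn_mk, true_and] at ha hb
      obtain ⟨i, rfl⟩ := ha
      obtain ⟨j, -, h⟩ := hb
      simp at h
  have hsub : T ⊆ A.image cwZone := by
    intro z hz
    rw [hT, Finset.mem_union] at hz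
    rcases hz with hz | hz
    · simp only [Finset.mem_map, Finset.mem_univ, Function.Embedding.coeFn_mk, true_and] at hz
      obtain ⟨i, rfl⟩ := hz
      obtain ⟨a, ha, hza⟩ := zone_hits_m hs hA i
      exact Finset.mem_image.mpr ⟨a, ha, hza⟩
    · simp only [Finset.mem_map, Finset.mem_filter, Finset.mem_univ,
        Function.Embedding.coeFn_mk, true_and] at hz
      obtain ⟨j, hj, rfl⟩ := hz
      obtain ⟨a, ha, hza⟩ := zone_hits_n hA j hj
      exact Finset.mem_image.mpr ⟨a, ha, hza⟩
  calc m + (Finset.univ.filter fun j => 0 < t j).card = T.card := hTcard.symm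
    _ ≤ (A.image cwZone).card := Finset.card_le_card hsub
    _ ≤ A.card := Finset.card_image_le

end CWAux


/-- For a Cameron–Walker graph `G` with standard labeling,
`m + |{j : tⱼ > 0}| ≤ i(G) ≤ min{∑ sᵢ + n, ∑ tⱼ + m}`. -/
theorem cwGraph_indepDomNumber_bounds (m n : ℕ) (s : Fin m → ℕ) (t : Fin n → ℕ)
    (B : Fin m → Fin n → Prop) (hm : 1 ≤ m) (hn : 1 ≤ n) (hs : ∀ i, 1 ≤ s i)
    (hconn : (bipGraph m n B).Connected) :
    m + (Finset.univ.filter fun j => 0 < t j).card ≤ indepDomNumber (cwGraph m n s t B) ∧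
    indepDomNumber (cwGraph m n s t B) ≤ min ((∑ i, s i) + n) ((∑ j, t j) + m) := by
  have h1 : ((∑ i, s i) + n) ∈
      {k | ∃ A : Finset (CWVert m n s t), IsIndepDomSet (cwGraph m n s t B) A ∧ A.card = k} :=
    ⟨cwA1 m n s t, cwA1_isIndepDom hs, cwA1_card⟩
  have h2 : ((∑ j, t j) + m) ∈
      {k | ∃ A : Finset (CWVert m n s t), IsIndepDomSet (cwGraph m n s t B) A ∧ A.card = k} :=
    ⟨cwA2 m n s t, cwA2_isIndepDom hm hconn, by rw [cwA2_card, Nat.add_comm]⟩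
  constructor
  · apply le_csInf ⟨_, h1⟩
    rintro k ⟨A, hA, rfl⟩
    exact cw_lower_bound hs hA
  · exact le_min (Nat.sInf_le h1) (Nat.sInf_le h2)
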